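/- arXiv:2502.03288 — 4 statements merged into one kernel-verified Lean document; each statement's English description precedes it below -/
import Mathlib

section
/- Every vertex of an A-mediated graph lies in the convex hull of A, i.e., V ⊆ conv(A). -/
/-- Every vertex of an A-mediated graph lies in the convex hull of A. -/
theorem mediated_graph_vertices_in_convexHull {d : ℕ}
    (A V : Finset (Fin d → ℝ)) (E : Finset ((Fin d → ℝ) × (Fin d → ℝ)))
    (hAV : A ⊆ V) (hE : E ⊆ V ×ˢ V)
    (hdeg : ∀ v ∈ V, v ∉ A → (V.filter (fun w => (v, w) ∈ E)).card = 2)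
    (hdegA : ∀ a ∈ A, (V.filter (fun w => (a, w) ∈ E)).card = 0)
    (hmid : ∀ v ∈ V, v ∉ A → ∀ w ∈ V, (v, w) ∈ E →
      (2 : ℝ) • v - w ∈ V ∧ (v, (2 : ℝ) • v - w) ∈ E) :
    (V : Set (Fin d → ℝ)) ⊆ convexHull ℝ (A : Set (Fin d → ℝ)) := by
  intro v0 hv0
  by_contra hv0c
  -- separate v0 from the (closed, convex) hull of A
  obtain ⟨f, u, hfa, hfv0⟩ := geometric_hahn_banach_closed_point
    (convex_convexHull ℝ (A : Set (Fin d → ℝ)))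
    ((A.finite_toSet).isClosed_convexHull ℝ) hv0c
  -- maximize f over V, then break ties by the strictly convex ∑ xᵢ²
  set g : (Fin d → ℝ) → ℝ := fun x => ∑ i, (x i) ^ 2 with hg
  have hVne : V.Nonempty := ⟨v0, hv0⟩
  set M' := (V.image f).max' (hVne.image f) with hM'
  have hMmem : M' ∈ V.image f := (V.image f).max'_mem _
  set S := V.filter (fun x => f x = M') with hS
  have hSne : S.Nonempty := by
    obtain ⟨x, hxV, hxf⟩ := Finset.mem_image.mp hMmem
    exact ⟨x, Finset.mem_filter.mpr ⟨hxV, hxf⟩⟩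
  obtain ⟨v, hvS, hvmax⟩ := S.exists_max_image g hSne
  obtain ⟨hvV, hvf⟩ := Finset.mem_filter.mp hvS
  -- v0's value bounds: f v > u on V-maximum, so v ∉ A
  have hfv0le : f v0 ≤ M' := Finset.le_max' _ _ (Finset.mem_image_of_mem f hv0)
  have hvA : v ∉ A := by
    intro hvA
    have : f v < u := hfa v (subset_convexHull ℝ _ hvA)
    rw [hvf] at this
    exact absurd (lt_of_lt_of_le hfv0 hfv0le) (not_lt.mpr this.le)
  -- extract an out-neighbor w ≠ v
  have hcard := hdeg v hvV hvA
  obtain ⟨w1, w2, hw12, hset⟩ := Finset.card_eq_two.mp hcard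
  have hw1mem : w1 ∈ V.filter (fun w => (v, w) ∈ E) := by rw [hset]; simp
  have hw2mem : w2 ∈ V.filter (fun w => (v, w) ∈ E) := by rw [hset]; simp
  obtain ⟨w, hwmem, hwv⟩ : ∃ w, w ∈ V.filter (fun w => (v, w) ∈ E) ∧ w ≠ v := by
    by_cases h1 : w1 = v
    · exact ⟨w2, hw2mem, fun h => hw12 (h1.trans h.symm)⟩
    · exact ⟨w1, hw1mem, h1⟩
  obtain ⟨hwV, hwE⟩ := Finset.mem_filter.mp hwmem
  obtain ⟨hw'V, hw'E⟩ := hmid v hvV hvA w hwV hwE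
  set w' : Fin d → ℝ := (2 : ℝ) • v - w with hw'
  -- f w = f w' = M'
  have hfw : f w ≤ M' := Finset.le_max' _ _ (Finset.mem_image_of_mem f hwV)
  have hfw' : f w' ≤ M' := Finset.le_max' _ _ (Finset.mem_image_of_mem f hw'V)
  have hsum : f w + f w' = 2 * f v := by
    rw [hw', map_sub, map_smul]
    simp
  have hfwM : f w = M' := by rw [hvf] at hsum; linarith
  have hfw'M : f w' = M' := by rw [hvf] at hsum; linarith
  -- so w, w' ∈ S and g w, g w' ≤ g v
  have hwS : w ∈ S := Finset.mem_filter.mpr ⟨hwV, hfwM⟩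
  have hw'S : w' ∈ S := Finset.mem_filter.mpr ⟨hw'V, hfw'M⟩
  have hgw := hvmax w hwS
  have hgw' := hvmax w' hw'S
  -- but g w + g w' = 2 g v + 2 ∑ (w i - v i)² > 2 g v, contradiction
  have hkey : g w + g w' = 2 * g v + 2 * ∑ i, (w i - v i) ^ 2 := by
    simp only [hg, hw']
    rw [← Finset.sum_add_distrib, Finset.mul_sum, Finset.mul_sum, ← Finset.sum_add_distrib]
    apply Finset.sum_congr rfl
    intro i _
    simp [Pi.sub_apply, Pi.smul_apply, smul_eq_mul]
    ring
  have hpos : 0 < ∑ i, (w i - v i) ^ 2 := by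
    apply Finset.sum_pos'
    · intro i _; positivity
    · obtain ⟨i, hi⟩ := Function.ne_iff.mp hwv
      refine ⟨i, Finset.mem_univ i, ?_⟩
      have : w i - v i ≠ 0 := sub_ne_zero_of_ne hi
      positivity
  linarith
end

section
/- Let G = (V, E) be an A-mediated graph where each v ∈ V \ A has outdegree exactly 2. Then the principal submatrix of the out-degree Laplacian L⁺(G) indexed by V \ A is invertible. -/
/-- Maximum principle for mediated graphs: if `X` vanishes on `A` and satisfies the
harmonicity equation `2 X v = ∑_{w ∈ N(v)} X w` at every vertex of `V \ A`, then
`X ≤ 0` on `V`. -/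
lemma mediated_aux {d : ℕ} (A V : Finset (Fin d → ℝ)) (E : Finset ((Fin d → ℝ) × (Fin d → ℝ)))
    (hdeg : ∀ v ∈ V, v ∉ A → (V.filter (fun w => (v, w) ∈ E)).card = 2)
    (hmid : ∀ v ∈ V, v ∉ A → ∀ w ∈ V, (v, w) ∈ E →
      (2 : ℝ) • v - w ∈ V ∧ (v, (2 : ℝ) • v - w) ∈ E)
    (X : (Fin d → ℝ) → ℝ)
    (h0 : ∀ a ∈ A, X a = 0)
    (heq : ∀ v ∈ V, v ∉ A → 2 * X v = ∑ w ∈ V.filter (fun w => (v, w) ∈ E), X w) :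
    ∀ v ∈ V, X v ≤ 0 := by
  classical
  by_contra hcon
  push_neg at hcon
  obtain ⟨v0, hv0V, hv0⟩ := hcon
  have hv0A : v0 ∉ A := by
    intro h
    rw [h0 v0 h] at hv0
    exact lt_irrefl _ hv0
  have hS0 : (V \ A).Nonempty := ⟨v0, Finset.mem_sdiff.2 ⟨hv0V, hv0A⟩⟩
  -- m is the maximum of X over V \ A
  obtain ⟨b, hbmem, hb⟩ := Finset.exists_max_image (V \ A) X hS0
  set m : ℝ := X b with hm
  have hmpos : 0 < m := lt_of_lt_of_le hv0 (hb v0 (Finset.mem_sdiff.2 ⟨hv0V, hv0A⟩))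
  -- S : maximizers of X in V \ A
  set S : Finset (Fin d → ℝ) := (V \ A).filter (fun u => X u = m) with hSdef
  have hSne : S.Nonempty := ⟨b, Finset.mem_filter.2 ⟨hbmem, rfl⟩⟩
  -- every out-neighbor of a vertex of S lies in S
  have hstep : ∀ v ∈ S, ∀ w ∈ V.filter (fun w => (v, w) ∈ E), w ∈ S := by
    intro v hvS
    obtain ⟨hvVA, hvX⟩ := Finset.mem_filter.1 hvS
    obtain ⟨hvV, hvA⟩ := Finset.mem_sdiff.1 hvVA
    have hsum : ∑ w ∈ V.filter (fun w => (v, w) ∈ E), X w = 2 * m := by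
      rw [← heq v hvV hvA, hvX]
    have hle : ∀ w ∈ V.filter (fun w => (v, w) ∈ E), X w ≤ m := by
      intro w hw
      obtain ⟨hwV, _⟩ := Finset.mem_filter.1 hw
      by_cases hwA : w ∈ A
      · rw [h0 w hwA]; exact le_of_lt hmpos
      · exact hb w (Finset.mem_sdiff.2 ⟨hwV, hwA⟩)
    have hall : ∀ w ∈ V.filter (fun w => (v, w) ∈ E), X w = m := by
      intro w hw
      by_contra hne
      have hlt : X w < m := lt_of_le_of_ne (hle w hw) hne
      have : ∑ w ∈ V.filter (fun w => (v, w) ∈ E), X w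
          < ∑ _w ∈ V.filter (fun w => (v, w) ∈ E), m :=
        Finset.sum_lt_sum hle ⟨w, hw, hlt⟩
      rw [Finset.sum_const, hdeg v hvV hvA, hsum] at this
      simp only [nsmul_eq_mul, Nat.cast_ofNat] at this
      linarith
    intro w hw
    have hwm := hall w hw
    have hwA : w ∉ A := by
      intro h
      rw [h0 w h] at hwm
      exact absurd hwm.symm (ne_of_gt hmpos)
    exact Finset.mem_filter.2 ⟨Finset.mem_sdiff.2 ⟨(Finset.mem_filter.1 hw).1, hwA⟩, hwm⟩
  -- pick v in S maximizing the squared Euclidean norm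
  obtain ⟨v, hvS, hvmax⟩ := Finset.exists_max_image S (fun u => ∑ i, (u i) ^ 2) hSne
  obtain ⟨hvVA, hvX⟩ := Finset.mem_filter.1 hvS
  obtain ⟨hvV, hvA⟩ := Finset.mem_sdiff.1 hvVA
  -- the neighborhood of v has two elements, so some neighbor w ≠ v
  have hcard := hdeg v hvV hvA
  obtain ⟨a1, ha1, a2, ha2, hane⟩ := Finset.one_lt_card.1 (by rw [hcard]; norm_num)
  obtain ⟨w, hwN, hwne⟩ : ∃ w ∈ V.filter (fun u => (v, u) ∈ E), w ≠ v := by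
    rcases eq_or_ne a1 v with h | h
    · exact ⟨a2, ha2, by rw [← h]; exact hane.symm⟩
    · exact ⟨a1, ha1, h⟩
  obtain ⟨hwV, hwE⟩ := Finset.mem_filter.1 hwN
  -- the reflected neighbor
  obtain ⟨hw'V, hw'E⟩ := hmid v hvV hvA w hwV hwE
  have hw'N : (2 : ℝ) • v - w ∈ V.filter (fun u => (v, u) ∈ E) :=
    Finset.mem_filter.2 ⟨hw'V, hw'E⟩
  -- both neighbors are in S, so their squared norms are ≤ that of v
  have hwS : w ∈ S := hstep v hvS w hwN
  have hw'S : (2 : ℝ) • v - w ∈ S := hstep v hvS _ hw'N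
  have h1 : ∑ i, (w i) ^ 2 ≤ ∑ i, (v i) ^ 2 := hvmax w hwS
  have h2 : ∑ i, (((2 : ℝ) • v - w) i) ^ 2 ≤ ∑ i, (v i) ^ 2 := hvmax _ hw'S
  -- parallelogram identity
  have hpar : ∑ i, (w i) ^ 2 + ∑ i, (((2 : ℝ) • v - w) i) ^ 2
      = 2 * (∑ i, (v i) ^ 2) + 2 * ∑ i, (v i - w i) ^ 2 := by
    rw [← Finset.sum_add_distrib, Finset.mul_sum, Finset.mul_sum, ← Finset.sum_add_distrib]
    apply Finset.sum_congr rfl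
    intro i _
    simp only [Pi.sub_apply, Pi.smul_apply, smul_eq_mul]
    ring
  have hpos : 0 < ∑ i, (v i - w i) ^ 2 := by
    obtain ⟨i, hi⟩ := Function.ne_iff.1 hwne
    apply Finset.sum_pos'
    · intro j _
      positivity
    · exact ⟨i, Finset.mem_univ i,
        pow_two_pos_of_ne_zero (sub_ne_zero.2 fun h => hi (by rw [h]))⟩
  linarith

/-- for an `A`-mediated graph in which every vertex of `V \ A` has
outdegree exactly `2`, the principal submatrix of the out-degree Laplacian
`L⁺(G) = D⁺(G) - adj(G)` indexed by `V \ A` is invertible. -/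
theorem mediated_graph_laplacian_submatrix_invertible {d : ℕ}
    (A V : Finset (Fin d → ℝ)) (E : Finset ((Fin d → ℝ) × (Fin d → ℝ)))
    (hAV : A ⊆ V) (hE : E ⊆ V ×ˢ V)
    (hdeg : ∀ v ∈ V, v ∉ A → (V.filter (fun w => (v, w) ∈ E)).card = 2)
    (hdegA : ∀ a ∈ A, (V.filter (fun w => (a, w) ∈ E)).card = 0)
    (hmid : ∀ v ∈ V, v ∉ A → ∀ w ∈ V, (v, w) ∈ E →
      (2 : ℝ) • v - w ∈ V ∧ (v, (2 : ℝ) • v - w) ∈ E)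
    (L : Matrix {v // v ∈ V \ A} {v // v ∈ V \ A} ℝ)
    (hL : ∀ v w : {v // v ∈ V \ A},
      L v w = (if v.1 = w.1 then ((V.filter (fun u => (v.1, u) ∈ E)).card : ℝ) else 0)
        - (if (v.1, w.1) ∈ E then 1 else 0)) :
    IsUnit L := by
  classical
  rw [Matrix.isUnit_iff_isUnit_det, isUnit_iff_ne_zero]
  intro hdet
  obtain ⟨x, hx0, hxv⟩ := Matrix.exists_mulVec_eq_zero_iff.2 hdet
  -- extend x by zero
  set X : (Fin d → ℝ) → ℝ := fun u => if h : u ∈ V \ A then x ⟨u, h⟩ else 0 with hXdef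
  have hXA : ∀ a ∈ A, X a = 0 := by
    intro a ha
    have h' : a ∉ V \ A := fun h => (Finset.mem_sdiff.1 h).2 ha
    show (if h : a ∈ V \ A then x ⟨a, h⟩ else 0) = 0
    exact dif_neg h'
  have hXval : ∀ w : {v // v ∈ V \ A}, X w.1 = x w := by
    intro w
    show (if h : w.1 ∈ V \ A then x ⟨w.1, h⟩ else 0) = x w
    rw [dif_pos w.2]
  -- the harmonicity equation
  have heq : ∀ v ∈ V, v ∉ A → 2 * X v = ∑ w ∈ V.filter (fun w => (v, w) ∈ E), X w := by
    intro v hvV hvA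
    have hvVA : v ∈ V \ A := Finset.mem_sdiff.2 ⟨hvV, hvA⟩
    have hrow := congrFun hxv ⟨v, hvVA⟩
    rw [Matrix.mulVec, dotProduct] at hrow
    simp only [hL, sub_mul, Pi.zero_apply] at hrow
    rw [Finset.sum_sub_distrib] at hrow
    have e1 : ∑ w : {u // u ∈ V \ A},
        (if (⟨v, hvVA⟩ : {u // u ∈ V \ A}).1 = w.1
          then ((V.filter (fun u => ((⟨v, hvVA⟩ : {u // u ∈ V \ A}).1, u) ∈ E)).card : ℝ)
          else 0) * x w = 2 * x ⟨v, hvVA⟩ := by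
      rw [Finset.sum_eq_single (⟨v, hvVA⟩ : {u // u ∈ V \ A})]
      · rw [if_pos rfl, hdeg v hvV hvA]
        norm_num
      · intro w _ hwne
        rw [if_neg (fun h => hwne (Subtype.ext h.symm)), zero_mul]
      · intro h
        exact absurd (Finset.mem_univ _) h
    have e2 : ∑ w : {u // u ∈ V \ A},
        (if ((⟨v, hvVA⟩ : {u // u ∈ V \ A}).1, w.1) ∈ E then (1 : ℝ) else 0) * x w
        = ∑ w ∈ V.filter (fun w => (v, w) ∈ E), X w := by
      simp only [ite_mul, one_mul, zero_mul]
      rw [Finset.sum_filter, ← Finset.sum_sdiff hAV]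
      have eA : ∑ w ∈ A, (if (v, w) ∈ E then X w else 0) = 0 := by
        apply Finset.sum_eq_zero
        intro a ha
        rw [hXA a ha]
        simp
      rw [eA, add_zero]
      rw [← Finset.sum_coe_sort (V \ A) (fun w => if (v, w) ∈ E then X w else 0)]
      apply Finset.sum_congr rfl
      intro w _
      rw [hXval]
    rw [e1, e2] at hrow
    have hv' : X v = x ⟨v, hvVA⟩ := hXval ⟨v, hvVA⟩
    rw [hv']
    linarith
  have heqneg : ∀ v ∈ V, v ∉ A → 2 * (-X v) = ∑ w ∈ V.filter (fun w => (v, w) ∈ E), -X w := by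
    intro v hvV hvA
    rw [Finset.sum_neg_distrib, ← heq v hvV hvA]
    ring
  have hle := mediated_aux A V E hdeg hmid X hXA heq
  have hge := mediated_aux A V E hdeg hmid (fun u => -X u) (fun a ha => by show -X a = 0; rw [hXA a ha]; ring)
    heqneg
  apply hx0
  funext w
  have hwV : w.1 ∈ V := (Finset.mem_sdiff.1 w.2).1
  have h1 := hle w.1 hwV
  have h2 : -X w.1 ≤ 0 := hge w.1 hwV
  have h3 : X w.1 = 0 := le_antisymm h1 (by linarith)
  have h4 := hXval w
  rw [h3] at h4
  simpa using h4.symm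
end

section
/- Let G = (V, E) be an A-mediated graph with each v ∈ V \ A having outdegree exactly 2. Then no nonempty subset U ⊆ V \ A has the property that for every v ∈ U, both out-neighbors of v lie in U. Equivalently, no principal submatrix of L⁺(G) indexed by a nonempty subset of V \ A has every row summing to 0. -/
/-- in an `A`-mediated graph where every vertex of `V \ A` has outdegree
exactly `2`, no nonempty `U ⊆ V \ A` is closed under taking out-neighbors
(equivalently, no nonempty principal submatrix of `L⁺(G)` indexed inside `V \ A`
has all row sums zero). -/
theorem mediated_graph_no_closed_subset {d : ℕ}
    (A V : Finset (Fin d → ℝ)) (E : Finset ((Fin d → ℝ) × (Fin d → ℝ)))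
    (hAV : A ⊆ V) (hE : E ⊆ V ×ˢ V)
    (hdeg : ∀ v ∈ V, v ∉ A → (V.filter (fun w => (v, w) ∈ E)).card = 2)
    (hmid : ∀ v ∈ V, v ∉ A → ∀ w ∈ V, (v, w) ∈ E →
      (2 : ℝ) • v - w ∈ V ∧ (v, (2 : ℝ) • v - w) ∈ E) :
    ¬ ∃ U : Finset (Fin d → ℝ), U ⊆ V \ A ∧ U.Nonempty ∧
      ∀ v ∈ U, ∀ w ∈ V, (v, w) ∈ E → w ∈ U := by
  rintro ⟨U, hU, ⟨v₀, hv₀⟩, hclosed⟩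
  set f : (Fin d → ℝ) → ℝ := fun u => ∑ i, (u i) ^ 2 with hf
  obtain ⟨v, hvU, hvmax⟩ := U.exists_max_image f ⟨v₀, hv₀⟩
  have hvVA := hU hvU
  rw [Finset.mem_sdiff] at hvVA
  obtain ⟨hvV, hvA⟩ := hvVA
  have hcard := hdeg v hvV hvA
  obtain ⟨w₁, w₂, hne, hset⟩ := Finset.card_eq_two.mp hcard
  have hw₁ : w₁ ∈ V.filter (fun w => (v, w) ∈ E) := by rw [hset]; simp
  have hw₂ : w₂ ∈ V.filter (fun w => (v, w) ∈ E) := by rw [hset]; simp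
  rw [Finset.mem_filter] at hw₁ hw₂
  have hm := hmid v hvV hvA w₁ hw₁.1 hw₁.2
  have hm' : (2:ℝ) • v - w₁ ∈ V.filter (fun w => (v, w) ∈ E) :=
    Finset.mem_filter.mpr hm
  rw [hset] at hm'
  have hveq : ∀ (u : Fin d → ℝ), (2:ℝ) • v - w₁ = u → ∀ j, 2 * v j - w₁ j = u j := by
    intro u h j
    have := congrFun h j
    simpa [Pi.smul_apply, Pi.sub_apply, smul_eq_mul] using this
  have hsum : ∀ j, w₁ j + w₂ j = 2 * v j := by
    rcases Finset.mem_insert.mp hm' with h | h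
    · exfalso
      have hv1 : ∀ j, w₁ j = v j := by
        intro j; have := hveq w₁ h j; linarith
      have hm2 := hmid v hvV hvA w₂ hw₂.1 hw₂.2
      have hm2' : (2:ℝ) • v - w₂ ∈ V.filter (fun w => (v, w) ∈ E) :=
        Finset.mem_filter.mpr hm2
      rw [hset] at hm2'
      have hveq2 : ∀ (u : Fin d → ℝ), (2:ℝ) • v - w₂ = u → ∀ j, 2 * v j - w₂ j = u j := by
        intro u h2 j
        have := congrFun h2 j
        simpa [Pi.smul_apply, Pi.sub_apply, smul_eq_mul] using this
      rcases Finset.mem_insert.mp hm2' with h2 | h2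
      · apply hne
        funext j
        have := hveq2 w₁ h2 j
        have := hv1 j
        linarith
      · rw [Finset.mem_singleton] at h2
        apply hne
        funext j
        have := hveq2 w₂ h2 j
        have := hv1 j
        linarith
    · rw [Finset.mem_singleton] at h
      intro j
      have := hveq w₂ h j
      linarith
  have hw₁U := hclosed v hvU w₁ hw₁.1 hw₁.2
  have hw₂U := hclosed v hvU w₂ hw₂.1 hw₂.2
  have h1 := hvmax w₁ hw₁U
  have h2 := hvmax w₂ hw₂U
  obtain ⟨i, hi⟩ : ∃ i, w₁ i ≠ w₂ i := by
    by_contra h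
    push_neg at h
    exact hne (funext h)
  have hpos : 0 < ∑ j, (w₁ j - w₂ j) ^ 2 :=
    Finset.sum_pos' (fun j _ => sq_nonneg _)
      ⟨i, Finset.mem_univ i, by have : w₁ i - w₂ i ≠ 0 := sub_ne_zero.mpr hi; positivity⟩
  have hkey : 4 * f v + ∑ j, (w₁ j - w₂ j) ^ 2 = 2 * f w₁ + 2 * f w₂ := by
    simp only [hf]
    rw [Finset.mul_sum, Finset.mul_sum, Finset.mul_sum, ← Finset.sum_add_distrib,
      ← Finset.sum_add_distrib]
    apply Finset.sum_congr rfl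
    intro j _
    have hv : 2 * v j = w₁ j + w₂ j := (hsum j).symm
    linear_combination (2 * v j + w₁ j + w₂ j) * hv
  linarith
end

section
/- For any directed graph G where every vertex v in a distinguished subset S has outdegree exactly 2 (counting out-neighbors in the full vertex set) and such that no nonempty subset U ⊆ S satisfies 'both out-neighbors of each u ∈ U lie in U', the matrix M indexed by S with M_{vv} = 2 and M_{vw} = −1 if (v,w) is an arc with w ∈ S, 0 otherwise, is invertible and the entries of M⁻¹ are nonnegative. -/
/-- Reznick's Lemma 4.3: if every `v ∈ S` has exactly two out-neighbors
(in the whole vertex set) and no nonempty `U ⊆ S` is closed under taking out-neighbors,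
then the matrix indexed by `S` with diagonal `2` and `-1` at arcs inside `S` is
invertible with entrywise nonnegative inverse. -/
theorem laplacian_type_matrix_invertible_nonneg_inverse {ι : Type*} [Fintype ι]
    [DecidableEq ι]
    (S : Finset ι) (arc : ι → ι → Prop) [DecidableRel arc]
    (hdeg : ∀ v ∈ S, (Finset.univ.filter (fun w => arc v w)).card = 2)
    (hU : ¬ ∃ U : Finset ι, U ⊆ S ∧ U.Nonempty ∧
      ∀ u ∈ U, ∀ w, arc u w → w ∈ U)
    (M : Matrix {v // v ∈ S} {v // v ∈ S} ℝ)
    (hM : ∀ v w : {v // v ∈ S},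
      M v w = if v = w then 2 else if arc v.1 w.1 then -1 else 0) :
    IsUnit M ∧ ∀ i j, 0 ≤ M⁻¹ i j := by
  classical
  -- Key monotonicity lemma: M *ᵥ x ≥ 0 entrywise implies x ≥ 0 entrywise.
  have key : ∀ x : {v // v ∈ S} → ℝ, (∀ i, 0 ≤ M.mulVec x i) → ∀ i, 0 ≤ x i := by
    intro x hx
    by_contra hcon
    push_neg at hcon
    obtain ⟨i0, hi0⟩ := hcon
    have hne : (Finset.univ : Finset {v // v ∈ S}).Nonempty := ⟨i0, Finset.mem_univ _⟩
    set m := Finset.univ.inf' hne x with hmdef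
    have hmneg : m < 0 := lt_of_le_of_lt (Finset.inf'_le _ (Finset.mem_univ i0)) hi0
    have hmle : ∀ k, m ≤ x k := fun k => Finset.inf'_le _ (Finset.mem_univ k)
    apply hU
    refine ⟨(Finset.univ.filter (fun k : {v // v ∈ S} => x k = m)).image Subtype.val,
      ?_, ?_, ?_⟩
    · intro v hv
      simp only [Finset.mem_image, Finset.mem_filter] at hv
      obtain ⟨k, _, rfl⟩ := hv
      exact k.2
    · obtain ⟨k, -, hk⟩ := Finset.exists_mem_eq_inf' hne x
      exact ⟨k.1, Finset.mem_image_of_mem _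
        (Finset.mem_filter.mpr ⟨Finset.mem_univ _, hk.symm⟩)⟩
    · intro u hu w harc
      simp only [Finset.mem_image, Finset.mem_filter] at hu ⊢
      obtain ⟨ku, ⟨-, hxu⟩, rfl⟩ := hu
      set F : Finset {v // v ∈ S} :=
        Finset.univ.filter (fun k => k ≠ ku ∧ arc ku.1 k.1) with hFdef
      have hterm : ∀ k, M ku k * x k =
          (if k = ku then 2 * x k else 0) +
            (if k ≠ ku ∧ arc ku.1 k.1 then -(x k) else 0) := by
        intro k
        rw [hM]
        by_cases h1 : ku = k
        · subst h1; simp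
        · by_cases h2 : arc ku.1 k.1 <;>
            simp [h1, Ne.symm h1, h2]
      have hmv : M.mulVec x ku = 2 * m - ∑ k ∈ F, x k := by
        have : M.mulVec x ku = ∑ k, M ku k * x k := rfl
        rw [this]
        simp only [hterm]
        rw [Finset.sum_add_distrib, Finset.sum_ite_eq' Finset.univ ku]
        simp only [Finset.mem_univ, if_true, hxu]
        congr 1
        rw [← Finset.sum_filter, ← hFdef, Finset.sum_neg_distrib]
      have hsum : ∑ k ∈ F, x k ≤ 2 * m := by
        have := hx ku
        rw [hmv] at this
        linarith
      have hlow : (F.card : ℝ) * m ≤ ∑ k ∈ F, x k := by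
        have := Finset.card_nsmul_le_sum F x m (fun k _ => hmle k)
        simpa [nsmul_eq_mul] using this
      -- N : out-neighbors of u in ι
      have hN : (Finset.univ.filter (fun w => arc ku.1 w)).card = 2 := hdeg ku.1 ku.2
      by_cases hloop : arc ku.1 ku.1
      · -- self-loop case: F has at most 1 element, contradiction
        exfalso
        have hF1 : F.card ≤ 1 := by
          have hinj : ∀ k ∈ F, (k : ι) ∈
              (Finset.univ.filter (fun w => arc ku.1 w)).erase ku.1 := by
            intro k hk
            rw [hFdef, Finset.mem_filter] at hk
            refine Finset.mem_erase.mpr ⟨?_, Finset.mem_filter.mpr ⟨Finset.mem_univ _, hk.2.2⟩⟩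
            exact fun h => hk.2.1 (Subtype.ext h)
          have hkuN : ku.1 ∈ Finset.univ.filter (fun w => arc ku.1 w) :=
            Finset.mem_filter.mpr ⟨Finset.mem_univ _, hloop⟩
          have hle : F.card ≤ ((Finset.univ.filter (fun w => arc ku.1 w)).erase ku.1).card :=
            Finset.card_le_card_of_injOn Subtype.val hinj (Subtype.val_injective.injOn)
          rwa [Finset.card_erase_of_mem hkuN, hN] at hle
        have hc : (F.card : ℝ) ≤ 1 := by exact_mod_cast hF1
        nlinarith [hlow, hsum, hmneg, hc]
      · -- no self-loop: F has exactly 2 elements, all with minimal value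
        have hF2 : F.card ≤ 2 := by
          have hinj : ∀ k ∈ F, (k : ι) ∈ Finset.univ.filter (fun w => arc ku.1 w) := by
            intro k hk
            rw [hFdef, Finset.mem_filter] at hk
            exact Finset.mem_filter.mpr ⟨Finset.mem_univ _, hk.2.2⟩
          calc F.card ≤ (Finset.univ.filter (fun w => arc ku.1 w)).card :=
                Finset.card_le_card_of_injOn Subtype.val hinj (Subtype.val_injective.injOn)
            _ = 2 := hN
        have hFeq : F.card = 2 := by
          rcases Nat.lt_or_ge F.card 2 with h | h
          · exfalso
            have hc : (F.card : ℝ) ≤ 1 := by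
              have : F.card ≤ 1 := Nat.lt_succ_iff.mp h
              exact_mod_cast this
            nlinarith [hlow, hsum, hmneg, hc]
          · omega
        have hall : ∀ k ∈ F, x k = m := by
          have hzero : ∑ k ∈ F, (x k - m) = 0 := by
            have h1 : ∑ k ∈ F, (x k - m) = (∑ k ∈ F, x k) - F.card * m := by
              rw [Finset.sum_sub_distrib, Finset.sum_const, nsmul_eq_mul]
            have h2 : 0 ≤ ∑ k ∈ F, (x k - m) :=
              Finset.sum_nonneg fun k _ => by linarith [hmle k]
            have h3 : ∑ k ∈ F, (x k - m) ≤ 0 := by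
              rw [h1, hFeq]; push_cast; linarith
            linarith
          intro k hk
          have := (Finset.sum_eq_zero_iff_of_nonneg
            (fun k _ => by linarith [hmle k] : ∀ k ∈ F, 0 ≤ x k - m)).mp hzero k hk
          linarith
        by_cases hwS : w ∈ S
        · have hne' : (⟨w, hwS⟩ : {v // v ∈ S}) ≠ ku := by
            intro h
            apply hloop
            have : w = ku.1 := congrArg Subtype.val h
            rwa [this] at harc
          have hkF : (⟨w, hwS⟩ : {v // v ∈ S}) ∈ F := by
            rw [hFdef, Finset.mem_filter]
            exact ⟨Finset.mem_univ _, hne', harc⟩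
          exact ⟨⟨w, hwS⟩, ⟨Finset.mem_univ _, hall _ hkF⟩, rfl⟩
        · exfalso
          have hwN : w ∈ Finset.univ.filter (fun w => arc ku.1 w) :=
            Finset.mem_filter.mpr ⟨Finset.mem_univ _, harc⟩
          have hinj : ∀ k ∈ F, (k : ι) ∈
              (Finset.univ.filter (fun w => arc ku.1 w)).erase w := by
            intro k hk
            rw [hFdef, Finset.mem_filter] at hk
            refine Finset.mem_erase.mpr ⟨?_,
              Finset.mem_filter.mpr ⟨Finset.mem_univ _, hk.2.2⟩⟩
            intro h
            exact hwS (h ▸ k.2)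
          have : F.card ≤ ((Finset.univ.filter (fun w => arc ku.1 w)).erase w).card :=
            Finset.card_le_card_of_injOn Subtype.val hinj (Subtype.val_injective.injOn)
          rw [Finset.card_erase_of_mem hwN, hN, hFeq] at this
          omega
  -- invertibility
  have hdet : M.det ≠ 0 := by
    intro h
    obtain ⟨v, hv, hv0⟩ := (Matrix.exists_mulVec_eq_zero_iff).mpr h
    apply hv
    funext i
    have h1 := key v (fun i => by rw [hv0]; exact le_refl 0) i
    have h2 := key (-v) (fun i => by rw [Matrix.mulVec_neg, hv0]; simp) i
    simp only [Pi.neg_apply] at h2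
    simp only [Pi.zero_apply]
    linarith
  have hunit : IsUnit M := (Matrix.isUnit_iff_isUnit_det M).mpr (isUnit_iff_ne_zero.mpr hdet)
  refine ⟨hunit, fun i j => ?_⟩
  have hMinv : M * M⁻¹ = 1 := Matrix.mul_nonsing_inv M (isUnit_iff_ne_zero.mpr hdet)
  refine key (fun k => M⁻¹ k j) (fun i => ?_) i
  have hcol : M.mulVec (fun k => M⁻¹ k j) i = (M * M⁻¹) i j := by
    rw [Matrix.mul_apply]; rfl
  rw [hcol, hMinv]
  by_cases h : i = j <;> simp [Matrix.one_apply, h]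
end
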